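/- For each positive integer k, the constant A_k := (6/π²) Σ_{ℓ powerful, f(ℓ) = k − 1} 1/ψ(ℓ) satisfies A_k = (6/π²) Σ_{n=1}^∞ ρ_k(n)/ψ(n), where both series converge. -/

import Mathlib

open Finset
open scoped Classical

/-- Number of distinct exponents in the prime factorization of `n`. -/
noncomputable def fexp (n : ℕ) : ℕ :=
  (n.primeFactors.image fun p => n.factorization p).card

/-- `n` is powerful if every prime dividing `n` divides it at least twice. -/
def Powerful (n : ℕ) : Prop :=
  0 < n ∧ ∀ p : ℕ, p.Prime → p ∣ n → p ^ 2 ∣ n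

/-- Dedekind `ψ` function, as a real number. -/
noncomputable def dedekindPsi (n : ℕ) : ℝ :=
  (n : ℝ) * ∏ p ∈ n.primeFactors, (1 + 1 / (p : ℝ))

noncomputable def rho : ℕ → ℕ → ℝ
  | 0, _ => 0
  | 1, n => if n = 1 then 1 else 0
  | (k + 2), n =>
      if n = 1 ∨ ¬ Squarefree n then 0
      else (1 / ((n : ℝ) - 1)) * ∑ d ∈ n.divisors.filter (· < n), rho (k + 1) d

/-- `g(n) = ω(n) - f(n)`. -/
noncomputable def gexp (n : ℕ) : ℕ := n.primeFactors.card - fexp n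

/-- `n` is special if all exponents in its prime factorization are distinct. -/
noncomputable def Special (n : ℕ) : Prop := fexp n = n.primeFactors.card

noncomputable def rad (n : ℕ) : ℕ := ∏ p ∈ n.primeFactors, p

lemma rad_pos (n : ℕ) : 0 < rad n :=
  Finset.prod_pos fun p hp => (Nat.prime_of_mem_primeFactors hp).pos

lemma rad_ne_zero (n : ℕ) : rad n ≠ 0 := (rad_pos n).ne'

lemma rad_dvd (n : ℕ) : rad n ∣ n := Nat.prod_primeFactors_dvd n

lemma primeFactors_rad (n : ℕ) : (rad n).primeFactors = n.primeFactors :=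
  Nat.primeFactors_prod fun _ hp => Nat.prime_of_mem_primeFactors hp

lemma factorization_rad_apply (n p : ℕ) :
    (rad n).factorization p = if p ∈ n.primeFactors then 1 else 0 := by
  unfold rad
  rw [Nat.factorization_prod fun q hq => (Nat.prime_of_mem_primeFactors hq).ne_zero]
  rw [Finset.sum_apply']
  rw [Finset.sum_congr rfl (fun q hq => by
    rw [Nat.Prime.factorization (Nat.prime_of_mem_primeFactors hq), Finsupp.single_apply])]
  simp [Finset.sum_ite_eq]

lemma squarefree_rad (n : ℕ) : Squarefree (rad n) := by
  rw [Nat.squarefree_iff_factorization_le_one (rad_ne_zero n)]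
  intro p
  rw [factorization_rad_apply]
  split <;> simp

lemma rad_of_squarefree {m : ℕ} (hm : Squarefree m) : rad m = m :=
  Nat.prod_primeFactors_of_squarefree hm

lemma sq_factorization_eq_one {m p : ℕ} (hm : Squarefree m) (hp : p ∈ m.primeFactors) :
    m.factorization p = 1 := by
  have h1 := (Nat.squarefree_iff_factorization_le_one hm.ne_zero).mp hm p
  have h2 := Nat.Prime.factorization_pos_of_dvd (Nat.prime_of_mem_primeFactors hp)
    hm.ne_zero (Nat.dvd_of_mem_primeFactors hp)
  omega

lemma factorization_pos_of_mem {n p : ℕ} (hp : p ∈ n.primeFactors) :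
    0 < n.factorization p := by
  have := Nat.mem_primeFactors.mp hp
  exact Nat.Prime.factorization_pos_of_dvd this.1 this.2.2 this.2.1

lemma not_mem_primeFactors_iff {n p : ℕ} (hn : n ≠ 0) (hp : p.Prime) :
    p ∉ n.primeFactors ↔ n.factorization p = 0 := by
  rw [← Nat.support_factorization, Finsupp.notMem_support_iff]

section Part2

lemma factorization_mulpow {m n' : ℕ} (hm : m ≠ 0) (hn' : n' ≠ 0) (c p : ℕ) :
    (n' * m ^ c).factorization p = n'.factorization p + c * m.factorization p := by
  rw [Nat.factorization_mul hn' (pow_ne_zero c hm), Nat.factorization_pow]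
  simp

lemma primeFactors_mulpow {m n' c : ℕ} (hm : m ≠ 0) (hn' : n' ≠ 0) (hc : c ≠ 0)
    (hsub : n'.primeFactors ⊆ m.primeFactors) :
    (n' * m ^ c).primeFactors = m.primeFactors := by
  rw [Nat.primeFactors_mul hn' (pow_ne_zero c hm), Nat.primeFactors_pow m hc,
    Finset.union_eq_right.mpr hsub]

lemma rad_mulpow {m n' c : ℕ} (hmsq : Squarefree m) (hn' : n' ≠ 0) (hc : c ≠ 0)
    (hsub : n'.primeFactors ⊆ m.primeFactors) : rad (n' * m ^ c) = m := by
  unfold rad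
  rw [primeFactors_mulpow hmsq.ne_zero hn' hc hsub]
  exact Nat.prod_primeFactors_of_squarefree hmsq

lemma mulpow_factorization_eq {m n' : ℕ} (hmsq : Squarefree m) (hn' : n' ≠ 0) (c : ℕ)
    {p : ℕ} (hp : p ∈ m.primeFactors) :
    (n' * m ^ c).factorization p = n'.factorization p + c := by
  rw [factorization_mulpow hmsq.ne_zero hn', sq_factorization_eq_one hmsq hp, mul_one]

lemma factorization_mulpow_ge {m n' c : ℕ} (hmsq : Squarefree m) (hn' : n' ≠ 0)
    {p : ℕ} (hp : p ∈ m.primeFactors) :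
    c ≤ (n' * m ^ c).factorization p := by
  rw [mulpow_factorization_eq hmsq hn' c hp]; omega

lemma factorization_mulpow_witness {m n' c : ℕ} (hmsq : Squarefree m) (hn' : n' ≠ 0)
    (hsub : n'.primeFactors ⊆ m.primeFactors) (hne : n'.primeFactors ≠ m.primeFactors) :
    ∃ p ∈ m.primeFactors, (n' * m ^ c).factorization p = c := by
  obtain ⟨p, hpm, hpn⟩ := Finset.exists_of_ssubset (hsub.ssubset_of_ne hne)
  refine ⟨p, hpm, ?_⟩
  rw [mulpow_factorization_eq hmsq hn' c hpm,
    (not_mem_primeFactors_iff hn' (Nat.prime_of_mem_primeFactors hpm)).mp hpn, zero_add]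

lemma fexp_mulpow {m n' c : ℕ} (hmsq : Squarefree m) (hn' : n' ≠ 0) (hc : c ≠ 0)
    (hsub : n'.primeFactors ⊆ m.primeFactors) (hne : n'.primeFactors ≠ m.primeFactors) :
    fexp (n' * m ^ c) = fexp n' + 1 := by
  unfold fexp
  rw [primeFactors_mulpow hmsq.ne_zero hn' hc hsub]
  rw [Finset.image_congr (g := fun p => n'.factorization p + c)
    (fun p hp => mulpow_factorization_eq hmsq hn' c hp)]
  have himg : m.primeFactors.image (fun p => n'.factorization p + c)
      = insert c ((n'.primeFactors.image fun p => n'.factorization p).image (· + c)) := by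
    ext x
    simp only [Finset.mem_image, Finset.mem_insert]
    constructor
    · rintro ⟨p, hpm, rfl⟩
      by_cases hpn : p ∈ n'.primeFactors
      · exact Or.inr ⟨n'.factorization p, ⟨p, hpn, rfl⟩, rfl⟩
      · left
        rw [(not_mem_primeFactors_iff hn' (Nat.prime_of_mem_primeFactors hpm)).mp hpn, zero_add]
    · rintro (rfl | ⟨y, ⟨p, hpn, rfl⟩, rfl⟩)
      · obtain ⟨p, hpm, hpn⟩ := Finset.exists_of_ssubset (hsub.ssubset_of_ne hne)
        exact ⟨p, hpm, by
          rw [(not_mem_primeFactors_iff hn' (Nat.prime_of_mem_primeFactors hpm)).mp hpn, zero_add]⟩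
      · exact ⟨p, hsub hpn, rfl⟩
  rw [himg]
  rw [Finset.card_insert_of_notMem (by
    simp only [Finset.mem_image, not_exists]
    rintro x ⟨⟨p, hpn, rfl⟩, hx⟩
    have := factorization_pos_of_mem hpn
    omega)]
  rw [Finset.card_image_of_injective _ (add_left_injective c)]

end Part2

section Part3

lemma primeFactors_mul_rad {n : ℕ} (hn : n ≠ 0) :
    (n * rad n).primeFactors = n.primeFactors := by
  rw [Nat.primeFactors_mul hn (rad_ne_zero n), primeFactors_rad, Finset.union_self]

lemma factorization_mul_rad {n : ℕ} (hn : n ≠ 0) {p : ℕ} (hp : p ∈ n.primeFactors) :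
    (n * rad n).factorization p = n.factorization p + 1 := by
  rw [Nat.factorization_mul hn (rad_ne_zero n), Finsupp.add_apply, factorization_rad_apply,
    if_pos hp]

lemma powerful_mul_rad {n : ℕ} (hn : n ≠ 0) : Powerful (n * rad n) := by
  have hnr : n * rad n ≠ 0 := mul_ne_zero hn (rad_ne_zero n)
  refine ⟨Nat.pos_of_ne_zero hnr, fun p hp hpdvd => ?_⟩
  have hmem : p ∈ (n * rad n).primeFactors := Nat.mem_primeFactors.mpr ⟨hp, hpdvd, hnr⟩
  rw [primeFactors_mul_rad hn] at hmem
  rw [Nat.Prime.pow_dvd_iff_le_factorization hp hnr, factorization_mul_rad hn hmem]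
  have := factorization_pos_of_mem hmem
  omega

lemma fexp_mul_rad {n : ℕ} (hn : n ≠ 0) : fexp (n * rad n) = fexp n := by
  unfold fexp
  rw [primeFactors_mul_rad hn,
    Finset.image_congr (g := fun p => n.factorization p + 1)
      (fun p hp => factorization_mul_rad hn hp),
    show (fun p => n.factorization p + 1) = ((· + 1) ∘ fun p => n.factorization p) from rfl,
    ← Finset.image_image, Finset.card_image_of_injective _ (add_left_injective 1)]

lemma rad_congr {a b : ℕ} (h : a.primeFactors = b.primeFactors) : rad a = rad b := by
  unfold rad; rw [h]

lemma rad_mul_rad {n : ℕ} (hn : n ≠ 0) : rad (n * rad n) = rad n := by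
  rw [rad_congr (primeFactors_mul_rad hn)]

lemma mul_rad_inj {n₁ n₂ : ℕ} (h1 : n₁ ≠ 0) (h2 : n₂ ≠ 0)
    (h : n₁ * rad n₁ = n₂ * rad n₂) : n₁ = n₂ := by
  have hr : rad n₁ = rad n₂ := by
    rw [← rad_mul_rad h1, ← rad_mul_rad h2, h]
  rw [hr] at h
  exact Nat.eq_of_mul_eq_mul_right (rad_pos n₂) h

lemma powerful_two_le_factorization {ℓ p : ℕ} (h : Powerful ℓ) (hp : p ∈ ℓ.primeFactors) :
    2 ≤ ℓ.factorization p := by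
  have hm := Nat.mem_primeFactors.mp hp
  exact (Nat.Prime.pow_dvd_iff_le_factorization hm.1 h.1.ne').mp (h.2 p hm.1 hm.2.1)

lemma powerful_decomp {ℓ : ℕ} (h : Powerful ℓ) : ∃ n, n ≠ 0 ∧ n * rad n = ℓ := by
  have hℓ : ℓ ≠ 0 := h.1.ne'
  have hdvd := rad_dvd ℓ
  refine ⟨ℓ / rad ℓ, (Nat.div_pos (Nat.le_of_dvd h.1 hdvd) (rad_pos ℓ)).ne', ?_⟩
  set n := ℓ / rad ℓ with hndef
  have hn : n ≠ 0 := (Nat.div_pos (Nat.le_of_dvd h.1 hdvd) (rad_pos ℓ)).ne'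
  have hfac : ∀ p, n.factorization p
      = ℓ.factorization p - (if p ∈ ℓ.primeFactors then 1 else 0) := by
    intro p
    rw [hndef, Nat.factorization_div hdvd, Finsupp.tsub_apply, factorization_rad_apply]
  have hpf : n.primeFactors = ℓ.primeFactors := by
    apply Finset.Subset.antisymm
    · exact Nat.primeFactors_mono (Nat.div_dvd_of_dvd hdvd) hℓ
    · intro p hp
      have h2 := powerful_two_le_factorization h hp
      rw [← Nat.support_factorization, Finsupp.mem_support_iff, hfac p, if_pos hp]
      omega
  have hr : rad n = rad ℓ := by unfold rad; rw [hpf]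
  rw [hr, Nat.div_mul_cancel hdvd]

lemma psi_nonneg (n : ℕ) : 0 ≤ dedekindPsi n := by
  unfold dedekindPsi
  apply mul_nonneg (Nat.cast_nonneg n)
  exact Finset.prod_nonneg fun p _ => by positivity

lemma psi_pos {n : ℕ} (hn : n ≠ 0) : 0 < dedekindPsi n := by
  unfold dedekindPsi
  apply mul_pos (by exact_mod_cast Nat.pos_of_ne_zero hn)
  exact Finset.prod_pos fun p _ => by positivity

lemma le_psi (n : ℕ) : (n : ℝ) ≤ dedekindPsi n := by
  unfold dedekindPsi
  nth_rewrite 1 [← mul_one (n : ℝ)]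
  apply mul_le_mul_of_nonneg_left _ (Nat.cast_nonneg n)
  calc (1:ℝ) = ∏ _p ∈ n.primeFactors, 1 := by simp
    _ ≤ ∏ p ∈ n.primeFactors, (1 + 1 / (p:ℝ)) := by
        apply Finset.prod_le_prod (fun i _ => zero_le_one)
        intro i _
        have : (0:ℝ) ≤ 1 / (i:ℝ) := by positivity
        linarith

lemma psi_mul_rad {n : ℕ} (hn : n ≠ 0) :
    dedekindPsi (n * rad n) = n * dedekindPsi (rad n) := by
  unfold dedekindPsi
  rw [primeFactors_mul_rad hn, primeFactors_rad]
  push_cast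
  ring

lemma powerful_exists_sq_cube : ∀ ℓ, Powerful ℓ → ∃ a b, a ≠ 0 ∧ b ≠ 0 ∧ a ^ 2 * b ^ 3 = ℓ := by
  intro ℓ
  induction ℓ using Nat.strong_induction_on with
  | _ ℓ ih =>
    intro hℓ
    rcases eq_or_ne ℓ 1 with rfl | h1
    · exact ⟨1, 1, one_ne_zero, one_ne_zero, by norm_num⟩
    have hℓ0 : ℓ ≠ 0 := hℓ.1.ne'
    have hp : ℓ.minFac.Prime := Nat.minFac_prime h1
    set p := ℓ.minFac with hpdef
    set e := ℓ.factorization p with he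
    have hdvd : p ∣ ℓ := Nat.minFac_dvd ℓ
    have he2 : 2 ≤ e := (Nat.Prime.pow_dvd_iff_le_factorization hp hℓ0).mp (hℓ.2 p hp hdvd)
    set ℓ' := ℓ / p ^ e with hℓ'def
    have hmul : p ^ e * ℓ' = ℓ := Nat.ordProj_mul_ordCompl_eq_self ℓ p
    have hℓ'0 : ℓ' ≠ 0 := (Nat.ordCompl_pos p hℓ0).ne'
    have hlt : ℓ' < ℓ := by
      apply Nat.div_lt_self hℓ.1
      calc 1 < p ^ 2 := by nlinarith [hp.two_le]
        _ ≤ p ^ e := Nat.pow_le_pow_right hp.pos he2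
    have hpow : Powerful ℓ' := by
      refine ⟨Nat.pos_of_ne_zero hℓ'0, fun q hq hqd => ?_⟩
      rw [Nat.Prime.pow_dvd_iff_le_factorization hq hℓ'0]
      have hfq : ℓ'.factorization q = (Finsupp.erase p ℓ.factorization) q := by
        rw [hℓ'def, he, Nat.factorization_ordCompl]
      have hq1 : 0 < ℓ'.factorization q := Nat.Prime.factorization_pos_of_dvd hq hℓ'0 hqd
      have hqp : q ≠ p := by
        intro hqp
        rw [hfq, hqp, Finsupp.erase_same] at hq1
        omega
      have heq : ℓ'.factorization q = ℓ.factorization q := by rw [hfq, Finsupp.erase_ne hqp]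
      have h2 : 2 ≤ ℓ.factorization q :=
        (Nat.Prime.pow_dvd_iff_le_factorization hq hℓ0).mp
          (hℓ.2 q hq (hqd.trans (Nat.ordCompl_dvd ℓ p)))
      omega
    obtain ⟨a', b', ha', hb', hab⟩ := ih ℓ' hlt hpow
    obtain ⟨x, y, hxy⟩ : ∃ x y, 2 * x + 3 * y = e := by
      rcases Nat.even_or_odd e with ⟨t, ht⟩ | ⟨t, ht⟩
      · exact ⟨t, 0, by omega⟩
      · exact ⟨t - 1, 1, by omega⟩
    refine ⟨a' * p ^ x, b' * p ^ y, mul_ne_zero ha' (pow_ne_zero _ hp.pos.ne'),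
      mul_ne_zero hb' (pow_ne_zero _ hp.pos.ne'), ?_⟩
    have : (a' * p ^ x) ^ 2 * (b' * p ^ y) ^ 3
        = (a' ^ 2 * b' ^ 3) * (p ^ (x * 2) * p ^ (y * 3)) := by
      rw [mul_pow, mul_pow, ← pow_mul, ← pow_mul]; ring
    rw [this, ← pow_add, hab]
    rw [show x * 2 + y * 3 = e by omega]
    rw [mul_comm ℓ' (p ^ e), hmul]

end Part3

section Part4
open ENNReal

lemma rho_one_apply (n : ℕ) : rho 1 n = if n = 1 then 1 else 0 := rfl

lemma rho_succ_succ (k n : ℕ) : rho (k + 2) n =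
    if n = 1 ∨ ¬ Squarefree n then 0
    else (1 / ((n : ℝ) - 1)) * ∑ d ∈ n.divisors.filter (· < n), rho (k + 1) d := rfl

lemma rho_nonneg : ∀ k n, 0 ≤ rho k n := by
  intro k
  induction k with
  | zero => intro n; rw [show rho 0 n = 0 from rfl]
  | succ k ih =>
    intro n
    match k with
    | 0 =>
      rw [rho_one_apply]
      split <;> norm_num
    | k + 1 =>
      rw [rho_succ_succ]
      split
      · exact le_refl 0
      · rename_i h
        push_neg at h
        have hn2 : 2 ≤ n := by
          have := h.2.ne_zero
          have := h.1
          omega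
        apply mul_nonneg
        · apply div_nonneg zero_le_one
          have : (2:ℝ) ≤ (n:ℝ) := by exact_mod_cast hn2
          linarith
        · exact Finset.sum_nonneg fun d _ => ih d

lemma rho_zero_right (k : ℕ) : rho k 0 = 0 := by
  match k with
  | 0 => rfl
  | 1 => rw [rho_one_apply]; norm_num
  | k + 2 => rw [rho_succ_succ]; rw [if_pos (Or.inr not_squarefree_zero)]

lemma fexp_one : fexp 1 = 0 := by simp [fexp]

lemma rad_one : rad 1 = 1 := by simp [rad]

lemma eq_one_of_fexp_zero {n : ℕ} (hn : n ≠ 0) (h : fexp n = 0) : n = 1 := by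
  unfold fexp at h
  rw [Finset.card_eq_zero, Finset.image_eq_empty, Nat.primeFactors_eq_empty] at h
  tauto

lemma eq_one_of_rad_eq_one {n : ℕ} (hn : n ≠ 0) (h : rad n = 1) : n = 1 := by
  have hpf : n.primeFactors = ∅ := by
    by_contra hne
    obtain ⟨p, hp⟩ := Finset.nonempty_of_ne_empty hne
    have hdvd : p ∣ rad n := Finset.dvd_prod_of_mem _ hp
    rw [h, Nat.dvd_one] at hdvd
    exact (Nat.prime_of_mem_primeFactors hp).one_lt.ne' hdvd
  rcases Nat.primeFactors_eq_empty.mp hpf with h0 | h1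
  · exact absurd h0 hn
  · exact h1

noncomputable def HF (k m n : ℕ) : ℝ≥0∞ :=
  if fexp n = k ∧ rad n = m ∧ n ≠ 0 then ((n : ℝ≥0∞))⁻¹ else 0

lemma tsum_pow_inv {m : ℕ} (hm : 2 ≤ m) :
    ∑' b : ℕ, ((m : ℝ≥0∞) ^ (b + 1))⁻¹ = ENNReal.ofReal (1 / ((m : ℝ) - 1)) := by
  have hm0 : (m : ℝ≥0∞) ≠ 0 := by exact_mod_cast Nat.pos_of_ne_zero (by omega) |>.ne'
  have hm1 : (1 : ℝ≥0∞) < (m : ℝ≥0∞) := by exact_mod_cast Nat.one_lt_cast.mpr (by omega)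
  have hinvlt : (m : ℝ≥0∞)⁻¹ < 1 := ENNReal.inv_lt_one.mpr hm1
  have h1 : ∀ b : ℕ, ((m : ℝ≥0∞) ^ (b + 1))⁻¹ = ((m : ℝ≥0∞)⁻¹) ^ b * (m : ℝ≥0∞)⁻¹ := by
    intro b
    rw [← pow_succ, ENNReal.inv_pow]
  rw [tsum_congr h1, ENNReal.tsum_mul_right, ENNReal.tsum_geometric]
  have hsub0 : (1 : ℝ≥0∞) - (m : ℝ≥0∞)⁻¹ ≠ 0 := by
    rw [ne_eq, tsub_eq_zero_iff_le]
    exact fun h => absurd (lt_of_lt_of_le hinvlt h) (lt_irrefl _)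
  have hfin1 : ((1 : ℝ≥0∞) - (m : ℝ≥0∞)⁻¹)⁻¹ ≠ ⊤ := ENNReal.inv_ne_top.mpr hsub0
  have hfin2 : (m : ℝ≥0∞)⁻¹ ≠ ⊤ := ENNReal.inv_ne_top.mpr hm0
  apply (ENNReal.toReal_eq_toReal_iff' (ENNReal.mul_ne_top hfin1 hfin2) ENNReal.ofReal_ne_top).mp
  rw [ENNReal.toReal_mul, ENNReal.toReal_inv, ENNReal.toReal_inv]
  rw [ENNReal.toReal_sub_of_le hinvlt.le ENNReal.one_ne_top]
  rw [ENNReal.toReal_inv, ENNReal.toReal_one, ENNReal.toReal_natCast]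
  have hmr : (2 : ℝ) ≤ (m : ℝ) := by exact_mod_cast hm
  have hd : (0:ℝ) < (m:ℝ) - 1 := by linarith
  rw [ENNReal.toReal_ofReal (by positivity)]
  have hm0' : (m:ℝ) ≠ 0 := by linarith
  have hs : (1:ℝ) - (m:ℝ)⁻¹ ≠ 0 := by
    have : (m:ℝ)⁻¹ < 1 := by
      rw [inv_lt_one_iff₀]
      right; linarith
    linarith
  field_simp

lemma HF_tsum : ∀ k m, (∑' n : ℕ, HF k m n) = ENNReal.ofReal (rho (k + 1) m) := by
  intro k
  induction k with
  | zero =>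
    intro m
    by_cases hm : m = 1
    · subst hm
      rw [tsum_eq_single 1 (fun n hn => by
        rw [HF, if_neg]
        rintro ⟨h0, -, h2⟩
        exact hn (eq_one_of_fexp_zero h2 h0))]
      rw [HF, if_pos ⟨fexp_one, rad_one, one_ne_zero⟩]
      rw [rho_one_apply, if_pos rfl]
      simp
    · have hz : ∀ n : ℕ, HF 0 m n = 0 := by
        intro n
        rw [HF, if_neg]
        rintro ⟨h0, h1, h2⟩
        have := eq_one_of_fexp_zero h2 h0
        subst this
        rw [rad_one] at h1
        exact hm h1.symm
      rw [tsum_congr hz, tsum_zero, rho_one_apply, if_neg hm, ENNReal.ofReal_zero]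
  | succ k ih =>
    intro m
    by_cases hmsq : Squarefree m
    swap
    · have hz : ∀ n : ℕ, HF (k + 1) m n = 0 := by
        intro n
        rw [HF, if_neg]
        rintro ⟨-, h1, -⟩
        exact hmsq (h1 ▸ squarefree_rad n)
      rw [tsum_congr hz, tsum_zero, rho_succ_succ, if_pos (Or.inr hmsq), ENNReal.ofReal_zero]
    by_cases hm1 : m = 1
    · subst hm1
      have hz : ∀ n : ℕ, HF (k + 1) 1 n = 0 := by
        intro n
        rw [HF, if_neg]
        rintro ⟨h0, h1, h2⟩
        have := eq_one_of_rad_eq_one h2 h1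
        subst this
        rw [fexp_one] at h0
        omega
      rw [tsum_congr hz, tsum_zero, rho_succ_succ, if_pos (Or.inl rfl), ENNReal.ofReal_zero]
    have hm0 : m ≠ 0 := hmsq.ne_zero
    have hm2 : 2 ≤ m := by omega
    set C : ℕ → Prop := fun n' => fexp n' = k ∧ rad n' ∣ m ∧ rad n' ≠ m ∧ n' ≠ 0 with hC
    set g : ℕ × ℕ → ℝ≥0∞ := fun q =>
      if C q.2 then (((q.2 * m ^ (q.1 + 1) : ℕ) : ℝ≥0∞))⁻¹ else 0 with hg
    have hCsub : ∀ n', C n' → n'.primeFactors ⊆ m.primeFactors := by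
      intro n' hc
      rw [← primeFactors_rad n']
      exact Nat.primeFactors_mono hc.2.1 hm0
    have hCne : ∀ n', C n' → n'.primeFactors ≠ m.primeFactors := by
      intro n' hc heq
      exact hc.2.2.1 ((rad_congr heq).trans (rad_of_squarefree hmsq))
    have hgsupp : ∀ q : ℕ × ℕ, g q ≠ 0 ↔ C q.2 := by
      intro q
      rw [hg]
      dsimp only
      split
      · rename_i h
        simp only [ne_eq, ENNReal.inv_eq_zero]
        exact ⟨fun _ => h, fun _ => ENNReal.natCast_ne_top _⟩
      · rename_i h
        simp [h]
    have hval : ∀ b n', C n' →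
        HF (k + 1) m (n' * m ^ (b + 1)) = (((n' * m ^ (b + 1) : ℕ) : ℝ≥0∞))⁻¹ := by
      intro b n' hc
      rw [HF, if_pos]
      refine ⟨?_, ?_, ?_⟩
      · rw [fexp_mulpow hmsq hc.2.2.2 (Nat.succ_ne_zero b) (hCsub n' hc) (hCne n' hc), hc.1]
      · exact rad_mulpow hmsq hc.2.2.2 (Nat.succ_ne_zero b) (hCsub n' hc)
      · exact mul_ne_zero hc.2.2.2 (pow_ne_zero _ hm0)
    have hstep1 : (∑' n : ℕ, HF (k + 1) m n) = ∑' q : ℕ × ℕ, g q := by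
      apply tsum_eq_tsum_of_ne_zero_bij
        (fun q => (q : ℕ × ℕ).2 * m ^ ((q : ℕ × ℕ).1 + 1))
      · rintro ⟨⟨b₁, n₁⟩, hq₁⟩ ⟨⟨b₂, n₂⟩, hq₂⟩ h
        simp only at h
        rw [Function.mem_support] at hq₁ hq₂
        have hc₁ : C n₁ := (hgsupp _).mp hq₁
        have hc₂ : C n₂ := (hgsupp _).mp hq₂
        obtain ⟨p₁, hp₁m, hp₁⟩ :=
          factorization_mulpow_witness (c := b₁ + 1) hmsq hc₁.2.2.2 (hCsub _ hc₁) (hCne _ hc₁)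
        obtain ⟨p₂, hp₂m, hp₂⟩ :=
          factorization_mulpow_witness (c := b₂ + 1) hmsq hc₂.2.2.2 (hCsub _ hc₂) (hCne _ hc₂)
        have hle₁ : b₁ + 1 ≤ b₂ + 1 := by
          have hge := factorization_mulpow_ge (c := b₁ + 1) (n' := n₁) hmsq hc₁.2.2.2 hp₂m
          rw [h, hp₂] at hge
          exact hge
        have hle₂ : b₂ + 1 ≤ b₁ + 1 := by
          have hge := factorization_mulpow_ge (c := b₂ + 1) (n' := n₂) hmsq hc₂.2.2.2 hp₁m
          rw [← h, hp₁] at hge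
          exact hge
        have hb : b₁ = b₂ := by omega
        subst hb
        have hn : n₁ = n₂ :=
          Nat.eq_of_mul_eq_mul_right (pow_pos (Nat.pos_of_ne_zero hm0) _) h
        simp [hn]
      · intro n hn
        rw [Function.mem_support, HF] at hn
        split at hn
        swap
        · exact absurd rfl hn
        rename_i hcond
        obtain ⟨hfx, hrad, hn0⟩ := hcond
        have hpfn : n.primeFactors = m.primeFactors := by
          rw [← primeFactors_rad n, hrad]
        have hnemp : m.primeFactors.Nonempty := Nat.nonempty_primeFactors.mpr (by omega)
        set c := m.primeFactors.inf' hnemp n.factorization with hcdef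
        have hc1 : 1 ≤ c := by
          rw [hcdef]
          exact Finset.le_inf' hnemp _ (fun p hp =>
            factorization_pos_of_mem (by rw [hpfn]; exact hp))
        have hdvd : m ^ c ∣ n := by
          rw [← Nat.factorization_le_iff_dvd (pow_ne_zero _ hm0) hn0, Finsupp.le_iff]
          intro p hp
          rw [Nat.factorization_pow] at hp ⊢
          have hpm : p ∈ m.primeFactors := by
            have hsupp := Finsupp.support_smul hp
            rwa [Nat.support_factorization] at hsupp
          rw [Finsupp.smul_apply, smul_eq_mul, sq_factorization_eq_one hmsq hpm, mul_one, hcdef]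
          exact Finset.inf'_le _ hpm
        set n' := n / m ^ c with hn'def
        have hn'eq : n' * m ^ c = n := Nat.div_mul_cancel hdvd
        have hn'0 : n' ≠ 0 := by
          intro h0
          rw [h0, zero_mul] at hn'eq
          exact hn0 hn'eq.symm
        obtain ⟨p₀, hp₀m, hp₀⟩ := Finset.exists_mem_eq_inf' hnemp n.factorization
        have hp₀n' : n'.factorization p₀ = 0 := by
          rw [hn'def, Nat.factorization_div hdvd, Finsupp.tsub_apply, Nat.factorization_pow,
            Finsupp.smul_apply, smul_eq_mul, sq_factorization_eq_one hmsq hp₀m, mul_one,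
            hcdef, hp₀]
          exact Nat.sub_self _
        have hp₀nn' : p₀ ∉ n'.primeFactors := by
          rw [not_mem_primeFactors_iff hn'0 (Nat.prime_of_mem_primeFactors hp₀m)]
          exact hp₀n'
        have hsub' : n'.primeFactors ⊆ m.primeFactors := by
          intro p hp
          rw [← hpfn]
          exact Nat.primeFactors_mono (Nat.div_dvd_of_dvd hdvd) hn0 hp
        have hne' : n'.primeFactors ≠ m.primeFactors := fun h => hp₀nn' (h ▸ hp₀m)
        have hcC : C n' := by
          refine ⟨?_, ?_, ?_, hn'0⟩
          · have hfm := fexp_mulpow hmsq hn'0 (by omega : c ≠ 0) hsub' hne'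
            rw [hn'eq] at hfm
            omega
          · have hdd : (∏ p ∈ n'.primeFactors, p) ∣ ∏ p ∈ m.primeFactors, p :=
              Finset.prod_dvd_prod_of_subset _ _ _ hsub'
            calc rad n' = ∏ p ∈ n'.primeFactors, p := rfl
              _ ∣ ∏ p ∈ m.primeFactors, p := hdd
              _ = m := Nat.prod_primeFactors_of_squarefree hmsq
          · intro h
            exact hne' ((primeFactors_rad n').symm.trans (by rw [h]))
        refine ⟨⟨(c - 1, n'), ?_⟩, ?_⟩
        · rw [Function.mem_support, hgsupp]
          exact hcC
        · simp only
          rw [show c - 1 + 1 = c by omega, hn'eq]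
      · rintro ⟨⟨b, n'⟩, hq⟩
        rw [Function.mem_support] at hq
        have hc : C n' := (hgsupp _).mp hq
        simp only
        rw [hval b n' hc, hg]
        dsimp only
        rw [if_pos hc]
    set s := m.divisors.filter (· < m) with hs
    have hstep2 : (∑' q : ℕ × ℕ, g q)
        = (∑' b : ℕ, ((m : ℝ≥0∞) ^ (b + 1))⁻¹)
          * ∑' n' : ℕ, (if C n' then ((n' : ℝ≥0∞))⁻¹ else 0) := by
      rw [ENNReal.tsum_prod']
      have hpoint : ∀ b n' : ℕ, g (b, n')
          = ((m : ℝ≥0∞) ^ (b + 1))⁻¹ * (if C n' then ((n' : ℝ≥0∞))⁻¹ else 0) := by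
        intro b n'
        rw [hg]
        dsimp only
        by_cases h : C n'
        · rw [if_pos h, if_pos h]
          rw [Nat.cast_mul, Nat.cast_pow]
          rw [ENNReal.mul_inv (Or.inl (Nat.cast_ne_zero.mpr h.2.2.2))
            (Or.inl (ENNReal.natCast_ne_top _))]
          rw [mul_comm]
        · rw [if_neg h, if_neg h, mul_zero]
      calc (∑' b : ℕ, ∑' n' : ℕ, g (b, n'))
          = ∑' b : ℕ, ∑' n' : ℕ,
              ((m : ℝ≥0∞) ^ (b + 1))⁻¹ * (if C n' then ((n' : ℝ≥0∞))⁻¹ else 0) :=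
            tsum_congr fun b => tsum_congr fun n' => hpoint b n'
        _ = ∑' b : ℕ, ((m : ℝ≥0∞) ^ (b + 1))⁻¹
              * ∑' n' : ℕ, (if C n' then ((n' : ℝ≥0∞))⁻¹ else 0) :=
            tsum_congr fun b => ENNReal.tsum_mul_left
        _ = _ := ENNReal.tsum_mul_right
    have hHF2 : ∀ n' : ℕ, (if C n' then ((n' : ℝ≥0∞))⁻¹ else 0) = ∑ d ∈ s, HF k d n' := by
      intro n'
      by_cases h : C n'
      · rw [if_pos h]
        rw [Finset.sum_eq_single_of_mem (rad n')
          (by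
            rw [hs]
            refine Finset.mem_filter.mpr ⟨Nat.mem_divisors.mpr ⟨h.2.1, hm0⟩, ?_⟩
            exact lt_of_le_of_ne (Nat.le_of_dvd (by omega) h.2.1) h.2.2.1)
          (by
            intro d hd hdne
            rw [HF, if_neg]
            rintro ⟨-, h2, -⟩
            exact hdne h2.symm)]
        rw [HF, if_pos ⟨h.1, rfl, h.2.2.2⟩]
      · rw [if_neg h, Finset.sum_eq_zero]
        intro d hd
        rw [HF, if_neg]
        rintro ⟨h1, h2, h3⟩
        apply h
        rw [hs] at hd
        have hds := Finset.mem_filter.mp hd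
        refine ⟨h1, ?_, ?_, h3⟩
        · rw [h2]; exact (Nat.mem_divisors.mp hds.1).1
        · rw [h2]; exact Nat.ne_of_lt hds.2
    have hstep3 : (∑' n' : ℕ, (if C n' then ((n' : ℝ≥0∞))⁻¹ else 0))
        = ∑ d ∈ s, ENNReal.ofReal (rho (k + 1) d) := by
      rw [tsum_congr hHF2, Summable.tsum_finsetSum (fun d _ => ENNReal.summable)]
      exact Finset.sum_congr rfl fun d _ => ih d
    rw [hstep1, hstep2, hstep3, tsum_pow_inv hm2]
    rw [← ENNReal.ofReal_sum_of_nonneg (fun d _ => rho_nonneg _ d)]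
    have hmr : (2 : ℝ) ≤ (m : ℝ) := by exact_mod_cast hm2
    rw [← ENNReal.ofReal_mul (div_nonneg zero_le_one (by linarith))]
    rw [rho_succ_succ, if_neg (by push_neg; exact ⟨hm1, hmsq⟩)]

end Part4

section Part5
open ENNReal

noncomputable def psiE (n : ℕ) : ℝ≥0∞ := ENNReal.ofReal (dedekindPsi n)

noncomputable def GN (K n : ℕ) : ℝ≥0∞ :=
  if n ≠ 0 ∧ fexp n = K then ((n : ℝ≥0∞) * psiE (rad n))⁻¹ else 0

lemma psiE_mul_rad {n : ℕ} (hn : n ≠ 0) :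
    psiE (n * rad n) = (n : ℝ≥0∞) * psiE (rad n) := by
  rw [psiE, psiE, psi_mul_rad hn, ENNReal.ofReal_mul (Nat.cast_nonneg n),
    ENNReal.ofReal_natCast]

lemma GN_supp (K : ℕ) : ∀ n, GN K n ≠ 0 ↔ (n ≠ 0 ∧ fexp n = K) := by
  intro n
  rw [GN]
  split
  · rename_i h
    simp only [ne_eq, ENNReal.inv_eq_zero]
    refine ⟨fun _ => h, fun _ => ?_⟩
    exact ENNReal.mul_ne_top (ENNReal.natCast_ne_top n) ENNReal.ofReal_ne_top
  · rename_i h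
    simp [h]

lemma pow_sum_eq_GN (K : ℕ) :
    (∑' ℓ : ℕ, (if Powerful ℓ ∧ fexp ℓ = K then (psiE ℓ)⁻¹ else 0))
      = ∑' n : ℕ, GN K n := by
  apply tsum_eq_tsum_of_ne_zero_bij (fun x => (x : ℕ) * rad (x : ℕ))
  · rintro ⟨n₁, h₁⟩ ⟨n₂, h₂⟩ h
    rw [Function.mem_support, GN_supp] at h₁ h₂
    exact Subtype.ext (mul_rad_inj h₁.1 h₂.1 h)
  · intro ℓ hℓ
    rw [Function.mem_support] at hℓ
    split at hℓ
    swap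
    · exact absurd rfl hℓ
    rename_i h
    obtain ⟨n, hn0, hnℓ⟩ := powerful_decomp h.1
    refine ⟨⟨n, ?_⟩, hnℓ⟩
    rw [Function.mem_support, GN_supp]
    exact ⟨hn0, by rw [← fexp_mul_rad hn0, hnℓ]; exact h.2⟩
  · rintro ⟨n, hn⟩
    rw [Function.mem_support, GN_supp] at hn
    simp only
    rw [if_pos ⟨powerful_mul_rad hn.1, by rw [fexp_mul_rad hn.1, hn.2]⟩]
    rw [GN, if_pos hn, psiE_mul_rad hn.1]

lemma gn_split (K : ℕ) :
    (∑' n : ℕ, GN K n) = ∑' m : ℕ, (psiE m)⁻¹ * ∑' n : ℕ, HF K m n := by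
  have h1 : ∀ n : ℕ, GN K n = ∑' m : ℕ,
      (if fexp n = K ∧ rad n = m ∧ n ≠ 0 then (psiE m)⁻¹ * ((n : ℝ≥0∞))⁻¹ else 0) := by
    intro n
    rw [tsum_eq_single (rad n) (fun m hm => if_neg (by rintro ⟨-, h, -⟩; exact hm h.symm))]
    by_cases h : n ≠ 0 ∧ fexp n = K
    · rw [GN, if_pos h, if_pos ⟨h.2, rfl, h.1⟩]
      rw [ENNReal.mul_inv (Or.inl (Nat.cast_ne_zero.mpr h.1))
        (Or.inl (ENNReal.natCast_ne_top n)), mul_comm]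
    · rw [GN, if_neg h, if_neg (by rintro ⟨ha, -, hb⟩; exact h ⟨hb, ha⟩)]
  rw [tsum_congr h1, ENNReal.tsum_comm]
  refine tsum_congr fun m => ?_
  rw [← ENNReal.tsum_mul_left]
  refine tsum_congr fun n => ?_
  rw [HF]
  split
  · rfl
  · rw [mul_zero]

lemma summable_aux (c : ℕ) (hc : 2 ≤ c) :
    (∑' a : ℕ, ((((a + 1 : ℕ)) : ℝ≥0∞) ^ c)⁻¹) ≠ ⊤ := by
  have hpt : ∀ a : ℕ, ((((a + 1 : ℕ)) : ℝ≥0∞) ^ c)⁻¹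
      = ENNReal.ofReal (1 / ((a + 1 : ℕ) : ℝ) ^ c) := by
    intro a
    rw [one_div, ENNReal.ofReal_inv_of_pos (by positivity), ENNReal.ofReal_pow (by positivity),
      ENNReal.ofReal_natCast]
  rw [tsum_congr hpt]
  have hsum : Summable (fun a : ℕ => 1 / ((a + 1 : ℕ) : ℝ) ^ c) := by
    have h0 : Summable (fun n : ℕ => 1 / (n : ℝ) ^ c) :=
      Real.summable_one_div_nat_pow.mpr hc
    have := (summable_nat_add_iff 1).mpr h0
    exact this.congr fun a => by push_cast; ring
  rw [← ENNReal.ofReal_tsum_of_nonneg (fun a => by positivity) hsum]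
  exact ENNReal.ofReal_ne_top

lemma pow_sum_ne_top (K : ℕ) :
    (∑' ℓ : ℕ, (if Powerful ℓ ∧ fexp ℓ = K then (psiE ℓ)⁻¹ else 0)) ≠ ⊤ := by
  set PW : ℕ → ℝ≥0∞ := fun ℓ => if Powerful ℓ then ((ℓ : ℝ≥0∞))⁻¹ else 0 with hPW
  have hle1 : ∀ ℓ : ℕ, (if Powerful ℓ ∧ fexp ℓ = K then (psiE ℓ)⁻¹ else 0) ≤ PW ℓ := by
    intro ℓ
    rw [hPW]
    dsimp only
    split
    · rename_i h
      rw [if_pos h.1]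
      apply ENNReal.inv_le_inv.mpr
      rw [psiE, ← ENNReal.ofReal_natCast]
      exact ENNReal.ofReal_le_ofReal (le_psi ℓ)
    · exact bot_le
  apply ne_top_of_le_ne_top ?_ (ENNReal.tsum_le_tsum hle1)
  -- bound the powerful sum
  set G2 : ℕ × ℕ → ℝ≥0∞ := fun q =>
    ((((q.1 + 1 : ℕ)) : ℝ≥0∞) ^ 2)⁻¹ * ((((q.2 + 1 : ℕ)) : ℝ≥0∞) ^ 3)⁻¹ with hG2
  have hsub : (∑' x : {ℓ : ℕ | Powerful ℓ}, (((x : ℕ)) : ℝ≥0∞)⁻¹) = ∑' ℓ : ℕ, PW ℓ := by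
    rw [_root_.tsum_subtype {ℓ : ℕ | Powerful ℓ} (fun ℓ => (((ℓ : ℕ)) : ℝ≥0∞)⁻¹)]
    refine tsum_congr fun ℓ => ?_
    rw [Set.indicator_apply, hPW]
    simp only [Set.mem_setOf_eq]
  rw [← hsub]
  have hG2top : (∑' q : ℕ × ℕ, G2 q) ≠ ⊤ := by
    rw [hG2, ENNReal.tsum_prod', ]
    have : ∀ a : ℕ, (∑' b : ℕ, ((((a + 1 : ℕ)) : ℝ≥0∞) ^ 2)⁻¹ * ((((b + 1 : ℕ)) : ℝ≥0∞) ^ 3)⁻¹)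
        = ((((a + 1 : ℕ)) : ℝ≥0∞) ^ 2)⁻¹ * ∑' b : ℕ, ((((b + 1 : ℕ)) : ℝ≥0∞) ^ 3)⁻¹ :=
      fun a => ENNReal.tsum_mul_left
    rw [tsum_congr this, ENNReal.tsum_mul_right]
    exact ENNReal.mul_ne_top (summable_aux 2 le_rfl) (summable_aux 3 (by omega))
  refine ne_top_of_le_ne_top hG2top ?_
  -- injective comparison
  have hA : ∀ x : {ℓ : ℕ | Powerful ℓ}, ∃ a b : ℕ, a ≠ 0 ∧ b ≠ 0 ∧ a ^ 2 * b ^ 3 = (x : ℕ) :=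
    fun x => powerful_exists_sq_cube _ x.2
  choose A B hA0 hB0 hAB using hA
  have hval : ∀ x : {ℓ : ℕ | Powerful ℓ},
      (((x : ℕ)) : ℝ≥0∞)⁻¹ = G2 (A x - 1, B x - 1) := by
    intro x
    rw [hG2]
    dsimp only
    rw [show A x - 1 + 1 = A x by have := hA0 x; omega,
      show B x - 1 + 1 = B x by have := hB0 x; omega]
    rw [← ENNReal.mul_inv (Or.inl (by exact_mod_cast pow_ne_zero 2 (Nat.cast_ne_zero.mpr (hA0 x))))
      (Or.inl (by apply ENNReal.pow_ne_top; exact ENNReal.natCast_ne_top _))]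
    congr 1
    rw [← Nat.cast_pow, ← Nat.cast_pow, ← Nat.cast_mul, hAB x]
  calc (∑' x : {ℓ : ℕ | Powerful ℓ}, (((x : ℕ)) : ℝ≥0∞)⁻¹)
      = ∑' x : {ℓ : ℕ | Powerful ℓ}, G2 (A x - 1, B x - 1) := tsum_congr hval
    _ ≤ ∑' q : ℕ × ℕ, G2 q := by
        apply ENNReal.tsum_comp_le_tsum_of_injective
        intro x y hxy
        have h1 : A x - 1 = A y - 1 := congrArg Prod.fst hxy
        have h2 : B x - 1 = B y - 1 := congrArg Prod.snd hxy
        have hAx := hA0 x; have hAy := hA0 y; have hBx := hB0 x; have hBy := hB0 y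
        have hAeq : A x = A y := by omega
        have hBeq : B x = B y := by omega
        apply Subtype.ext
        rw [← hAB x, ← hAB y, hAeq, hBeq]

theorem stmt_2 (k : ℕ) (hk : 1 ≤ k) :
    Summable (fun ℓ : ℕ => if Powerful ℓ ∧ fexp ℓ = k - 1 then 1 / dedekindPsi ℓ else 0) ∧
    Summable (fun n : ℕ => rho k (n + 1) / dedekindPsi (n + 1)) ∧
    6 / Real.pi ^ 2 *
        (∑' ℓ : ℕ, if Powerful ℓ ∧ fexp ℓ = k - 1 then 1 / dedekindPsi ℓ else 0) =
      6 / Real.pi ^ 2 * ∑' n : ℕ, rho k (n + 1) / dedekindPsi (n + 1) := by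
  set K := k - 1 with hK
  have hk1 : K + 1 = k := by omega
  set FE : ℕ → ℝ≥0∞ := fun m => (psiE m)⁻¹ * ENNReal.ofReal (rho k m) with hFE
  have hchain : (∑' ℓ : ℕ, (if Powerful ℓ ∧ fexp ℓ = K then (psiE ℓ)⁻¹ else 0))
      = ∑' m : ℕ, FE m := by
    rw [pow_sum_eq_GN K, gn_split K]
    exact tsum_congr fun m => by rw [HF_tsum K m, hk1, hFE]
  have hfin : (∑' m : ℕ, FE m) ≠ ⊤ := hchain ▸ pow_sum_ne_top K
  have hFE0 : FE 0 = 0 := by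
    rw [hFE]
    dsimp only
    rw [rho_zero_right, ENNReal.ofReal_zero, mul_zero]
  have hshift : (∑' m : ℕ, FE m) = ∑' j : ℕ, FE (j + 1) := by
    rw [tsum_eq_zero_add' ENNReal.summable, hFE0, zero_add]
  have hfin' : (∑' j : ℕ, FE (j + 1)) ≠ ⊤ := by rw [← hshift]; exact hfin
  have hFEfin : ∀ j : ℕ, FE (j + 1) ≠ ⊤ := by
    intro j
    rw [hFE]
    dsimp only
    apply ENNReal.mul_ne_top _ ENNReal.ofReal_ne_top
    rw [ENNReal.inv_ne_top]
    exact (ENNReal.ofReal_pos.mpr (psi_pos (Nat.succ_ne_zero j))).ne'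
  have hFEval : ∀ j : ℕ, (FE (j + 1)).toReal = rho k (j + 1) / dedekindPsi (j + 1) := by
    intro j
    rw [hFE]
    dsimp only
    rw [ENNReal.toReal_mul, ENNReal.toReal_inv, ENNReal.toReal_ofReal (rho_nonneg k _),
      psiE, ENNReal.toReal_ofReal (psi_nonneg _), div_eq_mul_inv, mul_comm]
  have hFPfin : ∀ ℓ : ℕ, (if Powerful ℓ ∧ fexp ℓ = K then (psiE ℓ)⁻¹ else 0) ≠ ⊤ := by
    intro ℓ
    split
    · rename_i h
      rw [ENNReal.inv_ne_top]
      exact (ENNReal.ofReal_pos.mpr (psi_pos h.1.1.ne')).ne'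
    · exact ENNReal.zero_ne_top
  have hFPval : ∀ ℓ : ℕ, (if Powerful ℓ ∧ fexp ℓ = K then 1 / dedekindPsi ℓ else 0)
      = ((if Powerful ℓ ∧ fexp ℓ = K then (psiE ℓ)⁻¹ else 0)).toReal := by
    intro ℓ
    split
    · rename_i h
      rw [ENNReal.toReal_inv, psiE, ENNReal.toReal_ofReal (psi_nonneg _), one_div]
    · simp
  refine ⟨?_, ?_, ?_⟩
  · have hs := ENNReal.summable_toReal (pow_sum_ne_top K)
    exact hs.congr fun ℓ => (hFPval ℓ).symm
  · have hs := ENNReal.summable_toReal hfin'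
    exact hs.congr fun j => hFEval j
  · congr 1
    calc (∑' ℓ : ℕ, if Powerful ℓ ∧ fexp ℓ = K then 1 / dedekindPsi ℓ else 0)
        = ∑' ℓ : ℕ, ((if Powerful ℓ ∧ fexp ℓ = K then (psiE ℓ)⁻¹ else 0)).toReal :=
          tsum_congr hFPval
      _ = (∑' ℓ : ℕ, (if Powerful ℓ ∧ fexp ℓ = K then (psiE ℓ)⁻¹ else 0)).toReal :=
          (ENNReal.tsum_toReal_eq hFPfin).symm
      _ = (∑' j : ℕ, FE (j + 1)).toReal := by rw [hchain, hshift]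
      _ = ∑' j : ℕ, (FE (j + 1)).toReal := ENNReal.tsum_toReal_eq hFEfin
      _ = ∑' n : ℕ, rho k (n + 1) / dedekindPsi (n + 1) := tsum_congr hFEval

end Part5
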